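/- arXiv:1804.04303 — 10 statements merged into one kernel-verified Lean document; each statement's English description precedes it below -/
import Mathlib

section
/- Let α : A → B be a de Vries extension. The set I_α of α-compact elements of A is an ideal of A: it contains 0, is downward closed, and is closed under binary joins. -/
/-- `a` is α-compact. -/
def IsAlphaCompact {A B : Type*} [CompleteBooleanAlgebra A] [CompleteBooleanAlgebra B]
    (α : A → B) (a : A) : Prop :=
  ∀ S : Set A, (α aᶜ)ᶜ ≤ sSup (α '' S) →
    ∃ T ⊆ S, T.Finite ∧ (α aᶜ)ᶜ ≤ sSup (α '' T)

theorem stmt4 {A B : Type*} [CompleteBooleanAlgebra A] [CompleteBooleanAlgebra B]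
    [IsAtomic B] (prec : A → A → Prop) (α : A → B)
    (dv1 : prec ⊤ ⊤)
    (dv2 : ∀ a b : A, prec a b → a ≤ b)
    (dv3 : ∀ a b c d : A, a ≤ b → prec b c → c ≤ d → prec a d)
    (dv4 : ∀ a b c : A, prec a b → prec a c → prec a (b ⊓ c))
    (dv5 : ∀ a b : A, prec a b → prec bᶜ aᶜ)
    (dv6 : ∀ a b : A, prec a b → ∃ c, prec a c ∧ prec c b)
    (dv7 : ∀ b : A, b = sSup {a : A | prec a b})
    (hinj : Function.Injective α)
    (m1 : α ⊥ = ⊥)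
    (m2 : ∀ a b : A, α (a ⊓ b) = α a ⊓ α b)
    (m3 : ∀ a b : A, prec a b → (α aᶜ)ᶜ ≤ α b)
    (m4 : ∀ b : A, α b = sSup (α '' {a : A | prec a b}))
    (hdense : ∀ y : B, ∃ T : Set (Set A), y = sSup ((fun S => sInf (α '' S)) '' T))
    :
    ⊥ ∈ {a : A | IsAlphaCompact α a} ∧
    (∀ a b : A, b ∈ {a : A | IsAlphaCompact α a} → a ≤ b → a ∈ {a : A | IsAlphaCompact α a}) ∧
    (∀ a b : A, IsAlphaCompact α a → IsAlphaCompact α b → IsAlphaCompact α (a ⊔ b)) := by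
  have htop : α ⊤ = ⊤ := by
    have h := m3 ⊤ ⊤ dv1
    rw [compl_top, m1, compl_bot] at h
    exact top_le_iff.mp h
  have hmono : ∀ a b : A, a ≤ b → α a ≤ α b := by
    intro a b h
    have : a ⊓ b = a := inf_eq_left.mpr h
    calc α a = α (a ⊓ b) := by rw [this]
      _ = α a ⊓ α b := m2 a b
      _ ≤ α b := inf_le_right
  refine ⟨?_, ?_, ?_⟩
  · intro S _
    refine ⟨∅, Set.empty_subset S, Set.finite_empty, ?_⟩
    simp [htop]
  · intro a b hb hab S hS
    have h1 : (α bᶜ)ᶜ ≤ sSup (α '' (S ∪ {aᶜ})) := by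
      rw [Set.image_union, Set.image_singleton, sSup_union, csSup_singleton]
      have : (⊤ : B) ≤ sSup (α '' S) ⊔ α aᶜ := by
        calc (⊤ : B) = (α aᶜ)ᶜ ⊔ α aᶜ := (compl_sup_eq_top).symm
          _ ≤ sSup (α '' S) ⊔ α aᶜ := sup_le_sup_right hS _
      exact le_trans le_top this
    obtain ⟨T, hTsub, hTfin, hT⟩ := hb (S ∪ {aᶜ}) h1
    refine ⟨T \ {aᶜ}, ?_, hTfin.diff, ?_⟩
    · intro t ht
      rcases hTsub ht.1 with h | h
      · exact h
      · exact absurd h ht.2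
    · have hab' : (α aᶜ)ᶜ ≤ (α bᶜ)ᶜ :=
        compl_le_compl (hmono _ _ (compl_le_compl hab))
      have hT' : T ⊆ (T \ {aᶜ}) ∪ {aᶜ} := by
        intro t ht
        by_cases h : t = aᶜ
        · exact Or.inr h
        · exact Or.inl ⟨ht, h⟩
      have h2 : (α aᶜ)ᶜ ≤ sSup (α '' (T \ {aᶜ})) ⊔ α aᶜ := by
        calc (α aᶜ)ᶜ ≤ (α bᶜ)ᶜ := hab'
          _ ≤ sSup (α '' T) := hT
          _ ≤ sSup (α '' ((T \ {aᶜ}) ∪ {aᶜ})) :=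
            sSup_le_sSup (Set.image_mono hT')
          _ = sSup (α '' (T \ {aᶜ})) ⊔ α aᶜ := by
            rw [Set.image_union, Set.image_singleton, sSup_union, csSup_singleton]
      exact Disjoint.left_le_of_le_sup_right h2 disjoint_compl_left
  · intro a b ha hb S hS
    have hkey : (α (a ⊔ b)ᶜ)ᶜ = (α aᶜ)ᶜ ⊔ (α bᶜ)ᶜ := by
      rw [compl_sup, m2, compl_inf]
    rw [hkey] at hS ⊢
    obtain ⟨Ta, hTa, hTafin, ha'⟩ := ha S (le_trans le_sup_left hS)
    obtain ⟨Tb, hTb, hTbfin, hb'⟩ := hb S (le_trans le_sup_right hS)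
    refine ⟨Ta ∪ Tb, Set.union_subset hTa hTb, hTafin.union hTbfin, ?_⟩
    rw [Set.image_union, sSup_union]
    exact sup_le (ha'.trans le_sup_left) (hb'.trans le_sup_right)
end

section
/- Let α : A → B be a de Vries extension. If α is locally compact (i.e., α(b) = ⋁{α(a) | a ∈ I_α, a ≺ b} for all b ∈ A), then I_α is a round ideal of A and ⋁ α[I_α] = 1. -/
section Aux

variable {A B : Type*} [CompleteBooleanAlgebra A] [CompleteBooleanAlgebra B] {α : A → B}

lemma alpha_mono (m2 : ∀ a b : A, α (a ⊓ b) = α a ⊓ α b) {a b : A} (h : a ≤ b) :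
    α a ≤ α b := by
  have : α a = α a ⊓ α b := by rw [← m2, inf_eq_left.mpr h]
  rw [this]; exact inf_le_right

lemma alpha_reflect (hinj : Function.Injective α)
    (m2 : ∀ a b : A, α (a ⊓ b) = α a ⊓ α b) {a b : A} (h : α a ≤ α b) : a ≤ b := by
  have h1 : α (a ⊓ b) = α a := by rw [m2]; exact inf_eq_left.mpr h
  exact inf_eq_left.mp (hinj h1)

lemma alpha_le_compl (m1 : α ⊥ = ⊥) (m2 : ∀ a b : A, α (a ⊓ b) = α a ⊓ α b) (a : A) :
    α a ≤ (α aᶜ)ᶜ := by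
  have h : α a ⊓ α aᶜ = ⊥ := by rw [← m2, inf_compl_eq_bot, m1]
  exact le_compl_iff_disjoint_right.mpr (disjoint_iff.mpr h)

lemma prec_sup {prec : A → A → Prop}
    (dv4 : ∀ a b c : A, prec a b → prec a c → prec a (b ⊓ c))
    (dv5 : ∀ a b : A, prec a b → prec bᶜ aᶜ)
    {a b c : A} (h1 : prec a c) (h2 : prec b c) : prec (a ⊔ b) c := by
  have h := dv5 _ _ (dv4 cᶜ aᶜ bᶜ (dv5 _ _ h1) (dv5 _ _ h2))
  simpa [compl_inf] using h

end Aux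

theorem stmt5 {A B : Type*} [CompleteBooleanAlgebra A] [CompleteBooleanAlgebra B]
    [IsAtomic B] (prec : A → A → Prop) (α : A → B)
    (dv1 : prec ⊤ ⊤)
    (dv2 : ∀ a b : A, prec a b → a ≤ b)
    (dv3 : ∀ a b c d : A, a ≤ b → prec b c → c ≤ d → prec a d)
    (dv4 : ∀ a b c : A, prec a b → prec a c → prec a (b ⊓ c))
    (dv5 : ∀ a b : A, prec a b → prec bᶜ aᶜ)
    (dv6 : ∀ a b : A, prec a b → ∃ c, prec a c ∧ prec c b)
    (dv7 : ∀ b : A, b = sSup {a : A | prec a b})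
    (hinj : Function.Injective α)
    (m1 : α ⊥ = ⊥)
    (m2 : ∀ a b : A, α (a ⊓ b) = α a ⊓ α b)
    (m3 : ∀ a b : A, prec a b → (α aᶜ)ᶜ ≤ α b)
    (m4 : ∀ b : A, α b = sSup (α '' {a : A | prec a b}))
    (hdense : ∀ y : B, ∃ T : Set (Set A), y = sSup ((fun S => sInf (α '' S)) '' T))
    (hlc : ∀ b : A, α b = sSup (α '' {a : A | IsAlphaCompact α a ∧ prec a b})) :
    (⊥ ∈ {a : A | IsAlphaCompact α a} ∧
      (∀ a b : A, IsAlphaCompact α b → a ≤ b → IsAlphaCompact α a) ∧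
      (∀ a b : A, IsAlphaCompact α a → IsAlphaCompact α b → IsAlphaCompact α (a ⊔ b))) ∧
    (∀ a : A, IsAlphaCompact α a → ∃ b : A, IsAlphaCompact α b ∧ prec a b) ∧
    sSup (α '' {a : A | IsAlphaCompact α a}) = ⊤ := by
  -- α ⊤ = ⊤
  have atop : α ⊤ = ⊤ := by
    have h := m3 ⊤ ⊤ dv1
    rw [compl_top, m1, compl_bot] at h
    exact top_le_iff.mp h
  -- ⊥ is compact
  have hbot : IsAlphaCompact α ⊥ := by
    intro S h
    refine ⟨∅, Set.empty_subset _, Set.finite_empty, ?_⟩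
    simp [compl_bot, atop]
  -- downward closed
  have hdown : ∀ a b : A, IsAlphaCompact α b → a ≤ b → IsAlphaCompact α a := by
    intro a b hb hab S h
    have hmono : α bᶜ ≤ α aᶜ := alpha_mono m2 (compl_le_compl hab)
    have hcc : (α aᶜ)ᶜ ≤ (α bᶜ)ᶜ := compl_le_compl hmono
    have h1 : (α bᶜ)ᶜ ≤ sSup (α '' insert aᶜ S) := by
      rw [Set.image_insert_eq, sSup_insert]
      calc (α bᶜ)ᶜ ≤ α aᶜ ⊔ (α aᶜ)ᶜ := by rw [sup_compl_eq_top]; exact le_top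
        _ ≤ α aᶜ ⊔ sSup (α '' S) := sup_le_sup_left h _
    obtain ⟨T, hTsub, hTfin, hT⟩ := hb _ h1
    refine ⟨T \ {aᶜ}, ?_, hTfin.diff, ?_⟩
    · intro x hx
      rcases hTsub hx.1 with h' | h'
      · exact absurd h' hx.2
      · exact h'
    · have h2 : sSup (α '' T) ≤ α aᶜ ⊔ sSup (α '' (T \ {aᶜ})) := by
        apply sSup_le
        rintro x ⟨t, htT, rfl⟩
        by_cases ht : t = aᶜ
        · subst ht; exact le_sup_left
        · exact le_sup_of_le_right (le_sSup ⟨t, ⟨htT, ht⟩, rfl⟩)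
      have h3 : (α aᶜ)ᶜ ≤ α aᶜ ⊔ sSup (α '' (T \ {aᶜ})) := le_trans (le_trans hcc hT) h2
      have h4 := inf_le_inf_left ((α aᶜ)ᶜ) h3
      rw [inf_sup_left] at h4
      simpa using h4
  -- closed under join
  have hsup : ∀ a b : A, IsAlphaCompact α a → IsAlphaCompact α b →
      IsAlphaCompact α (a ⊔ b) := by
    intro a b ha hb S h
    have key : (α (a ⊔ b)ᶜ)ᶜ = (α aᶜ)ᶜ ⊔ (α bᶜ)ᶜ := by
      rw [compl_sup, m2, compl_inf]
    obtain ⟨T₁, hT₁s, hT₁f, hT₁⟩ := ha S (le_trans (by rw [key]; exact le_sup_left) h)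
    obtain ⟨T₂, hT₂s, hT₂f, hT₂⟩ := hb S (le_trans (by rw [key]; exact le_sup_right) h)
    refine ⟨T₁ ∪ T₂, Set.union_subset hT₁s hT₂s, hT₁f.union hT₂f, ?_⟩
    rw [key, Set.image_union, sSup_union]
    exact sup_le_sup hT₁ hT₂
  -- finite sets of compacts: sSup is compact
  have hfinsup : ∀ T : Set A, T.Finite → (∀ t ∈ T, IsAlphaCompact α t) →
      IsAlphaCompact α (sSup T) := by
    intro T hTfin
    refine Set.Finite.induction_on
      (motive := fun T _ => (∀ t ∈ T, IsAlphaCompact α t) → IsAlphaCompact α (sSup T)) T hTfin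
      (fun _ => by simpa using hbot) ?_
    intro t T' _ _ ih hall
    rw [sSup_insert]
    exact hsup _ _ (hall t (Set.mem_insert _ _)) (ih fun x hx => hall x (Set.mem_insert_of_mem _ hx))
  -- prec ⊥ b
  have hprecbot : ∀ b : A, prec ⊥ b := by
    intro b
    have h := dv5 ⊤ ⊤ dv1
    rw [compl_top] at h
    exact dv3 _ _ _ _ le_rfl h bot_le
  -- finite sets all prec b: sSup precs b
  have hfinprec : ∀ T : Set A, T.Finite → ∀ b : A, (∀ t ∈ T, prec t b) →
      prec (sSup T) b := by
    intro T hTfin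
    refine Set.Finite.induction_on
      (motive := fun T _ => ∀ b : A, (∀ t ∈ T, prec t b) → prec (sSup T) b) T hTfin
      (fun b _ => by simpa using hprecbot b) ?_
    intro t T' _ _ ih b hall
    rw [sSup_insert]
    exact prec_sup dv4 dv5 (hall t (Set.mem_insert _ _))
      (ih b fun x hx => hall x (Set.mem_insert_of_mem _ hx))
  -- image sSup bound
  have himg : ∀ T : Set A, sSup (α '' T) ≤ α (sSup T) := by
    intro T
    apply sSup_le
    rintro x ⟨t, ht, rfl⟩
    exact alpha_mono m2 (le_sSup ht)
  -- all elements prec ⊤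
  have hprectop : ∀ c : A, prec c ⊤ := fun c => dv3 _ _ _ _ le_top dv1 le_rfl
  have htopset : {a : A | IsAlphaCompact α a ∧ prec a ⊤} = {a : A | IsAlphaCompact α a} := by
    ext x; simp [hprectop x]
  have htop : sSup (α '' {a : A | IsAlphaCompact α a}) = ⊤ := by
    rw [← htopset, ← hlc ⊤, atop]
  refine ⟨⟨hbot, hdown, hsup⟩, ?_, htop⟩
  -- roundness
  intro a ha
  have h1 : (α aᶜ)ᶜ ≤ sSup (α '' {a : A | IsAlphaCompact α a}) := by rw [htop]; exact le_top
  obtain ⟨T, hTsub, hTfin, hT⟩ := ha _ h1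
  set b₀ := sSup T with hb₀
  have hb₀c : IsAlphaCompact α b₀ := hfinsup T hTfin fun t ht => hTsub ht
  have h2 : (α aᶜ)ᶜ ≤ α b₀ := le_trans hT (himg T)
  have h3 : (α aᶜ)ᶜ ≤ sSup (α '' {c : A | IsAlphaCompact α c ∧ prec c b₀}) := by
    rw [← hlc b₀]; exact h2
  obtain ⟨T', hT'sub, hT'fin, hT'⟩ := ha _ h3
  have hs : prec (sSup T') b₀ := hfinprec T' hT'fin b₀ fun t ht => (hT'sub ht).2
  have hale : a ≤ sSup T' := by
    apply alpha_reflect hinj m2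
    exact le_trans (le_trans (alpha_le_compl m1 m2 a) hT') (himg T')
  exact ⟨b₀, hb₀c, dv3 _ _ _ _ hale hs le_rfl⟩
end

section
/- Every compact de Vries extension is normal: if α : A → B is a de Vries extension such that for every round filter F and round ideal I of A with ⋀ α[F] ≤ ⋁ α[I] one has F ∩ I ≠ ∅, then for every such F and I there exist a, b ∈ A with a ≺ b, ⋀ α[F] ≤ α(a), and α(b) ≤ ⋁ α[I]. -/
theorem stmt6 {A B : Type*} [CompleteBooleanAlgebra A] [CompleteBooleanAlgebra B]
    [IsAtomic B] (prec : A → A → Prop) (α : A → B)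
    (dv1 : prec ⊤ ⊤)
    (dv2 : ∀ a b : A, prec a b → a ≤ b)
    (dv3 : ∀ a b c d : A, a ≤ b → prec b c → c ≤ d → prec a d)
    (dv4 : ∀ a b c : A, prec a b → prec a c → prec a (b ⊓ c))
    (dv5 : ∀ a b : A, prec a b → prec bᶜ aᶜ)
    (dv6 : ∀ a b : A, prec a b → ∃ c, prec a c ∧ prec c b)
    (dv7 : ∀ b : A, b = sSup {a : A | prec a b})
    (hinj : Function.Injective α)
    (m1 : α ⊥ = ⊥)
    (m2 : ∀ a b : A, α (a ⊓ b) = α a ⊓ α b)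
    (m3 : ∀ a b : A, prec a b → (α aᶜ)ᶜ ≤ α b)
    (m4 : ∀ b : A, α b = sSup (α '' {a : A | prec a b}))
    (hdense : ∀ y : B, ∃ T : Set (Set A), y = sSup ((fun S => sInf (α '' S)) '' T))
    (hcompact : ∀ F I : Set A,
      (F.Nonempty ∧ (∀ a b : A, a ∈ F → a ≤ b → b ∈ F) ∧ (∀ a b : A, a ∈ F → b ∈ F → a ⊓ b ∈ F)) →
      (∀ b ∈ F, ∃ a ∈ F, prec a b) →
      (I.Nonempty ∧ (∀ a b : A, b ∈ I → a ≤ b → a ∈ I) ∧ (∀ a b : A, a ∈ I → b ∈ I → a ⊔ b ∈ I)) →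
      (∀ a ∈ I, ∃ b ∈ I, prec a b) →
      sInf (α '' F) ≤ sSup (α '' I) → (F ∩ I).Nonempty) :
    ∀ F I : Set A,
      (F.Nonempty ∧ (∀ a b : A, a ∈ F → a ≤ b → b ∈ F) ∧ (∀ a b : A, a ∈ F → b ∈ F → a ⊓ b ∈ F)) →
      (∀ b ∈ F, ∃ a ∈ F, prec a b) →
      (I.Nonempty ∧ (∀ a b : A, b ∈ I → a ≤ b → a ∈ I) ∧ (∀ a b : A, a ∈ I → b ∈ I → a ⊔ b ∈ I)) →
      (∀ a ∈ I, ∃ b ∈ I, prec a b) →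
      sInf (α '' F) ≤ sSup (α '' I) →
      ∃ a b : A, prec a b ∧ sInf (α '' F) ≤ α a ∧ α b ≤ sSup (α '' I) := by
  intro F I hF hFr hI hIr hle
  obtain ⟨c, hcF, hcI⟩ := hcompact F I hF hFr hI hIr hle
  obtain ⟨a, haF, hac⟩ := hFr c hcF
  obtain ⟨b, hbI, hcb⟩ := hIr c hcI
  refine ⟨a, b, dv3 a a c b le_rfl hac (dv2 c b hcb), ?_, ?_⟩
  · exact sInf_le ⟨a, haF, rfl⟩
  · exact le_sSup ⟨b, hbI, rfl⟩
end

section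
/- Let α : A → B be a de Vries extension and F a round filter of A. Then ¬⋀ α[F] = ⋁ α[J], where J = {c ∈ A | ¬c ∈ F}. -/
theorem stmt7 {A B : Type*} [CompleteBooleanAlgebra A] [CompleteBooleanAlgebra B]
    [IsAtomic B] (prec : A → A → Prop) (α : A → B)
    (dv1 : prec ⊤ ⊤)
    (dv2 : ∀ a b : A, prec a b → a ≤ b)
    (dv3 : ∀ a b c d : A, a ≤ b → prec b c → c ≤ d → prec a d)
    (dv4 : ∀ a b c : A, prec a b → prec a c → prec a (b ⊓ c))
    (dv5 : ∀ a b : A, prec a b → prec bᶜ aᶜ)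
    (dv6 : ∀ a b : A, prec a b → ∃ c, prec a c ∧ prec c b)
    (dv7 : ∀ b : A, b = sSup {a : A | prec a b})
    (hinj : Function.Injective α)
    (m1 : α ⊥ = ⊥)
    (m2 : ∀ a b : A, α (a ⊓ b) = α a ⊓ α b)
    (m3 : ∀ a b : A, prec a b → (α aᶜ)ᶜ ≤ α b)
    (m4 : ∀ b : A, α b = sSup (α '' {a : A | prec a b}))
    (hdense : ∀ y : B, ∃ T : Set (Set A), y = sSup ((fun S => sInf (α '' S)) '' T))
    (F : Set A)
    (hFfil : F.Nonempty ∧ (∀ a b : A, a ∈ F → a ≤ b → b ∈ F) ∧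
      (∀ a b : A, a ∈ F → b ∈ F → a ⊓ b ∈ F))
    (hFround : ∀ b ∈ F, ∃ a ∈ F, prec a b) :
    (sInf (α '' F))ᶜ = sSup (α '' {c : A | cᶜ ∈ F}) := by
  rw [compl_sInf]
  apply le_antisymm
  · refine iSup_le fun x => iSup_le fun hx => ?_
    obtain ⟨b, hbF, rfl⟩ := hx
    obtain ⟨a, haF, hab⟩ := hFround b hbF
    have h1 := m3 bᶜ aᶜ (dv5 a b hab)
    rw [compl_compl] at h1
    exact h1.trans (le_sSup ⟨aᶜ, by simpa using haF, rfl⟩)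
  · refine sSup_le fun x hx => ?_
    obtain ⟨c, hc, rfl⟩ := hx
    have h0 : α c ⊓ α cᶜ = ⊥ := by rw [← m2]; simp [m1]
    have h1 : α c ≤ (α cᶜ)ᶜ := by
      rw [le_compl_iff_disjoint_right, disjoint_iff]; exact h0
    exact h1.trans (le_iSup_of_le (α cᶜ) (le_iSup_of_le ⟨cᶜ, hc, rfl⟩ le_rfl))
end

section
/- Let α : A → B be a de Vries extension such that 1 ∈ I_α (i.e., 1 is α-compact). Then α is compact: for every round filter F and round ideal I of A with ⋀ α[F] ≤ ⋁ α[I], we have F ∩ I ≠ ∅. -/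
lemma aux_ub {A : Type*} [SemilatticeSup A] {I : Set A} (hne : I.Nonempty)
    (hjoin : ∀ a b, a ∈ I → b ∈ I → a ⊔ b ∈ I) :
    ∀ T : Set A, T.Finite → T ⊆ I → ∃ i ∈ I, ∀ x ∈ T, x ≤ i := by
  intro T hT
  induction T, hT using Set.Finite.induction_on with
  | empty => intro _; obtain ⟨i, hi⟩ := hne; exact ⟨i, hi, by simp⟩
  | @insert a s ha hs ih =>
    intro hsub
    obtain ⟨i, hiI, hub⟩ := ih (fun x hx => hsub (Set.mem_insert_of_mem _ hx))
    refine ⟨a ⊔ i, hjoin _ _ (hsub (Set.mem_insert _ _)) hiI, ?_⟩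
    intro x hx
    rcases hx with rfl | hx
    · exact le_sup_left
    · exact le_trans (hub x hx) le_sup_right

lemma aux_lb {A : Type*} [SemilatticeInf A] {F : Set A} (hne : F.Nonempty)
    (hmeet : ∀ a b, a ∈ F → b ∈ F → a ⊓ b ∈ F) :
    ∀ T : Set A, T.Finite → T ⊆ F → ∃ c ∈ F, ∀ x ∈ T, c ≤ x := by
  intro T hT
  induction T, hT using Set.Finite.induction_on with
  | empty => intro _; obtain ⟨c, hc⟩ := hne; exact ⟨c, hc, by simp⟩
  | @insert a s ha hs ih =>
    intro hsub
    obtain ⟨c, hcF, hlb⟩ := ih (fun x hx => hsub (Set.mem_insert_of_mem _ hx))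
    refine ⟨a ⊓ c, hmeet _ _ (hsub (Set.mem_insert _ _)) hcF, ?_⟩
    intro x hx
    rcases hx with rfl | hx
    · exact inf_le_left
    · exact le_trans inf_le_right (hlb x hx)

theorem stmt8 {A B : Type*} [CompleteBooleanAlgebra A] [CompleteBooleanAlgebra B]
    [IsAtomic B] (prec : A → A → Prop) (α : A → B)
    (dv1 : prec ⊤ ⊤)
    (dv2 : ∀ a b : A, prec a b → a ≤ b)
    (dv3 : ∀ a b c d : A, a ≤ b → prec b c → c ≤ d → prec a d)
    (dv4 : ∀ a b c : A, prec a b → prec a c → prec a (b ⊓ c))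
    (dv5 : ∀ a b : A, prec a b → prec bᶜ aᶜ)
    (dv6 : ∀ a b : A, prec a b → ∃ c, prec a c ∧ prec c b)
    (dv7 : ∀ b : A, b = sSup {a : A | prec a b})
    (hinj : Function.Injective α)
    (m1 : α ⊥ = ⊥)
    (m2 : ∀ a b : A, α (a ⊓ b) = α a ⊓ α b)
    (m3 : ∀ a b : A, prec a b → (α aᶜ)ᶜ ≤ α b)
    (m4 : ∀ b : A, α b = sSup (α '' {a : A | prec a b}))
    (hdense : ∀ y : B, ∃ T : Set (Set A), y = sSup ((fun S => sInf (α '' S)) '' T))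
    (htop : IsAlphaCompact α (⊤ : A)) :
    ∀ F I : Set A,
      (F.Nonempty ∧ (∀ a b : A, a ∈ F → a ≤ b → b ∈ F) ∧ (∀ a b : A, a ∈ F → b ∈ F → a ⊓ b ∈ F)) →
      (∀ b ∈ F, ∃ a ∈ F, prec a b) →
      (I.Nonempty ∧ (∀ a b : A, b ∈ I → a ≤ b → a ∈ I) ∧ (∀ a b : A, a ∈ I → b ∈ I → a ⊔ b ∈ I)) →
      (∀ a ∈ I, ∃ b ∈ I, prec a b) →
      sInf (α '' F) ≤ sSup (α '' I) → (F ∩ I).Nonempty := by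
  intro F I hF hFround hI hIround hle
  obtain ⟨hFne, hFup, hFmeet⟩ := hF
  obtain ⟨hIne, hIdown, hIjoin⟩ := hI
  have hmono : ∀ a b : A, a ≤ b → α a ≤ α b := by
    intro a b hab
    have h := m2 a b
    rw [inf_eq_left.mpr hab] at h
    rw [h]; exact inf_le_right
  set S : Set A := I ∪ (compl '' F) with hS
  have htopS : (⊤ : B) ≤ sSup (α '' S) := by
    have h1 : (sInf (α '' F))ᶜ ≤ sSup (α '' S) := by
      rw [compl_sInf]
      apply iSup₂_le
      rintro x ⟨b, hbF, rfl⟩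
      obtain ⟨a, haF, hab⟩ := hFround b hbF
      have h3 : (α b)ᶜ ≤ α aᶜ := by simpa using m3 bᶜ aᶜ (dv5 a b hab)
      exact le_trans h3 (le_sSup ⟨aᶜ, Or.inr ⟨a, haF, rfl⟩, rfl⟩)
    have h2 : sSup (α '' I) ≤ sSup (α '' S) :=
      sSup_le_sSup (Set.image_mono Set.subset_union_left)
    calc (⊤ : B) = (sInf (α '' F))ᶜ ⊔ sInf (α '' F) := (compl_sup_eq_top).symm
      _ ≤ sSup (α '' S) ⊔ sSup (α '' S) := sup_le_sup h1 (le_trans hle h2)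
      _ = sSup (α '' S) := sup_idem _
  have hcomp : (α (⊤ : A)ᶜ)ᶜ ≤ sSup (α '' S) := by
    simpa [compl_top, m1] using htopS
  obtain ⟨T, hTS, hTfin, hT⟩ := htop S hcomp
  have hT' : (⊤ : B) ≤ sSup (α '' T) := by
    simpa [compl_top, m1] using hT
  -- split T
  have hT1 : T ∩ I ⊆ I := Set.inter_subset_right
  obtain ⟨i, hiI, hub⟩ := aux_ub hIne hIjoin (T ∩ I) (hTfin.inter_of_left I) hT1
  have hCsub : compl '' (T \ I) ⊆ F := by
    rintro y ⟨x, ⟨hxT, hxI⟩, rfl⟩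
    rcases hTS hxT with hx | ⟨c, hcF, rfl⟩
    · exact absurd hx hxI
    · simpa using hcF
  obtain ⟨c, hcF, hlb⟩ := aux_lb hFne hFmeet (compl '' (T \ I))
    ((hTfin.diff).image compl) hCsub
  have hsup : sSup (α '' T) ≤ α i ⊔ α cᶜ := by
    apply sSup_le
    rintro y ⟨x, hxT, rfl⟩
    by_cases hx : x ∈ I
    · exact le_sup_of_le_left (hmono x i (hub x ⟨hxT, hx⟩))
    · have hcx : c ≤ xᶜ := hlb xᶜ ⟨x, ⟨hxT, hx⟩, rfl⟩
      have : x ≤ cᶜ := by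
        have := compl_le_compl hcx
        simpa using this
      exact le_sup_of_le_right (hmono x cᶜ this)
  have heqtop : α i ⊔ α cᶜ = ⊤ := top_le_iff.mp (le_trans hT' hsup)
  have hkey : α c = α (c ⊓ i) := by
    calc α c = α c ⊓ (α i ⊔ α cᶜ) := by rw [heqtop, inf_top_eq]
      _ = (α c ⊓ α i) ⊔ (α c ⊓ α cᶜ) := inf_sup_left _ _ _
      _ = α (c ⊓ i) ⊔ α (c ⊓ cᶜ) := by rw [m2, m2]
      _ = α (c ⊓ i) := by rw [inf_compl_eq_bot, m1, sup_bot_eq]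
  have hci : c ≤ i := inf_eq_left.mp (hinj hkey).symm
  exact ⟨i, hFup c i hcF hci, hiI⟩
end

section
/- Let (A, ◁, I) be a Dimov algebra and suppose axiom (∗) holds: if a ◁ (b ∨ ¬c) for all c ∈ I, then a ◁ b. Then axiom (I2) holds: if (a ∧ c) ◁ (b ∨ ¬c) for all c ∈ I, then a ◁ b. -/
theorem stmt10 {A : Type*} [CompleteBooleanAlgebra A] (lhd : A → A → Prop) (I : Set A)
    (dv1 : lhd ⊤ ⊤)
    (dv2 : ∀ a b : A, lhd a b → a ≤ b)
    (dv3 : ∀ a b c d : A, a ≤ b → lhd b c → c ≤ d → lhd a d)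
    (dv4 : ∀ a b c : A, lhd a b → lhd a c → lhd a (b ⊓ c))
    (dv5 : ∀ a b : A, lhd a b → lhd bᶜ aᶜ)
    (hne : I.Nonempty)
    (hdown : ∀ a b : A, b ∈ I → a ≤ b → a ∈ I)
    (hjoin : ∀ a b : A, a ∈ I → b ∈ I → a ⊔ b ∈ I)
    (star : ∀ a b : A, (∀ c ∈ I, lhd a (b ⊔ cᶜ)) → lhd a b) :
    ∀ a b : A, (∀ c ∈ I, lhd (a ⊓ c) (b ⊔ cᶜ)) → lhd a b := by
  intro a b h
  apply star
  intro c hc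
  -- It suffices to show lhd (bᶜ ⊓ c) aᶜ, then take complements via dv5.
  have key : lhd (bᶜ ⊓ c) aᶜ := by
    apply star
    intro d hd
    have he : c ⊔ d ∈ I := hjoin c d hc hd
    have h1 : lhd (a ⊓ (c ⊔ d)) (b ⊔ (c ⊔ d)ᶜ) := h (c ⊔ d) he
    have h2 := dv5 _ _ h1
    -- h2 : lhd (b ⊔ (c ⊔ d)ᶜ)ᶜ (a ⊓ (c ⊔ d))ᶜ
    refine dv3 _ _ _ _ ?_ h2 ?_
    · rw [compl_sup, compl_compl]
      exact inf_le_inf le_rfl le_sup_left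
    · rw [compl_inf, compl_sup]
      exact sup_le_sup le_rfl inf_le_right
  have := dv5 _ _ key
  simpa using this
end

section
/- Let (A, ◁, I) be a Dimov algebra and define a ≺ b iff there is a family {c_p | p ∈ ℚ ∩ [0,1]} with a ≤ c₀, c₁ ≤ b, and c_p ◁ c_q whenever p < q. Then ≺ satisfies the de Vries axioms (DV1)–(DV7); in particular (A, ≺) is a de Vries algebra. -/
/-- The finite set of rationals "assigned" after `n` steps of the Urysohn-style
recursion: the endpoints `0, 1` plus those of `e 0, …, e (n-1)` lying in `(0,1)`. -/
def stmt11Dset (e : ℕ → ℚ) (n : ℕ) : Finset ℚ :=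
  insert 0 (insert 1 (((Finset.range n).image e).filter fun p => 0 < p ∧ p < 1))

lemma stmt11_mem_Dset (e : ℕ → ℚ) (n : ℕ) (p : ℚ) :
    p ∈ stmt11Dset e n ↔ p = 0 ∨ p = 1 ∨ ((∃ m < n, e m = p) ∧ 0 < p ∧ p < 1) := by
  simp [stmt11Dset, Finset.mem_filter, Finset.mem_image, Finset.mem_range, and_assoc]

lemma stmt11_Dset_mono (e : ℕ → ℚ) {m n : ℕ} (h : m ≤ n) :
    stmt11Dset e m ⊆ stmt11Dset e n := by
  intro p hp
  rw [stmt11_mem_Dset] at hp ⊢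
  rcases hp with h0 | h1 | ⟨⟨k, hk, hek⟩, hlt⟩
  · exact Or.inl h0
  · exact Or.inr (Or.inl h1)
  · exact Or.inr (Or.inr ⟨⟨k, lt_of_lt_of_le hk h, hek⟩, hlt⟩)

lemma stmt11_mem_Dset_succ (e : ℕ → ℚ) (n : ℕ) (p : ℚ) :
    p ∈ stmt11Dset e (n + 1) ↔ p ∈ stmt11Dset e n ∨ (p = e n ∧ 0 < p ∧ p < 1) := by
  rw [stmt11_mem_Dset, stmt11_mem_Dset]
  constructor
  · rintro (h0 | h1 | ⟨⟨m, hm, hem⟩, hlt⟩)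
    · exact Or.inl (Or.inl h0)
    · exact Or.inl (Or.inr (Or.inl h1))
    · rcases Nat.lt_succ_iff_lt_or_eq.mp hm with hm' | rfl
      · exact Or.inl (Or.inr (Or.inr ⟨⟨m, hm', hem⟩, hlt⟩))
      · exact Or.inr ⟨hem.symm, hlt⟩
  · rintro ((h0 | h1 | ⟨⟨m, hm, hem⟩, hlt⟩) | ⟨rfl, hlt⟩)
    · exact Or.inl h0
    · exact Or.inr (Or.inl h1)
    · exact Or.inr (Or.inr ⟨⟨m, Nat.lt_succ_of_lt hm, hem⟩, hlt⟩)
    · exact Or.inr (Or.inr ⟨⟨n, Nat.lt_succ_self n, rfl⟩, hlt⟩)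

/-- Invariant of the recursion: endpoints are `a` and `x`, all assigned
non-top values lie in `I`, and `lhd` holds between assigned values. -/
def stmt11Inv {A : Type*} (lhd : A → A → Prop) (I : Set A) (a x : A)
    (e : ℕ → ℚ) (h : ℚ → A) (n : ℕ) : Prop :=
  h 0 = a ∧ h 1 = x ∧
    (∀ p ∈ stmt11Dset e n, p ≠ 1 → h p ∈ I) ∧
    (∀ p ∈ stmt11Dset e n, ∀ q ∈ stmt11Dset e n, p < q → lhd (h p) (h q))

lemma stmt11_inv_zero {A : Type*} (lhd : A → A → Prop) (I : Set A) (a x : A)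
    (e : ℕ → ℚ) (ha : a ∈ I) (hax : lhd a x) :
    stmt11Inv lhd I a x e (fun p => if p = 1 then x else a) 0 := by
  have hD : ∀ p : ℚ, p ∈ stmt11Dset e 0 ↔ p = 0 ∨ p = 1 := by
    intro p; rw [stmt11_mem_Dset]; simp
  refine ⟨by norm_num, by norm_num, ?_, ?_⟩
  · intro p hp hp1
    rcases (hD p).mp hp with rfl | rfl
    · simpa using ha
    · exact absurd rfl hp1
  · intro p hp q hq hpq
    rcases (hD p).mp hp with rfl | rfl <;> rcases (hD q).mp hq with rfl | rfl
    · exact absurd hpq (lt_irrefl _)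
    · simpa using hax
    · exact absurd hpq (by norm_num)
    · exact absurd hpq (lt_irrefl _)

lemma stmt11_inv_step {A : Type*} (lhd : A → A → Prop) (I : Set A)
    (htrans : ∀ a b c : A, lhd a b → lhd b c → lhd a c)
    (i1 : ∀ a b : A, a ∈ I → lhd a b → ∃ c ∈ I, lhd a c ∧ lhd c b)
    (a x : A) (e : ℕ → ℚ) (n : ℕ) (h : ℚ → A)
    (hInv : stmt11Inv lhd I a x e h n) :
    ∃ h' : ℚ → A, stmt11Inv lhd I a x e h' (n + 1) ∧ ∀ p ∈ stmt11Dset e n, h' p = h p := by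
  classical
  obtain ⟨hh0, hh1, hhI, hhl⟩ := hInv
  by_cases hcase : (0 < e n ∧ e n < 1) ∧ e n ∉ stmt11Dset e n
  · obtain ⟨⟨hr0, hr1⟩, hrD⟩ := hcase
    set r := e n with hrdef
    have h0D : (0 : ℚ) ∈ stmt11Dset e n := by rw [stmt11_mem_Dset]; exact Or.inl rfl
    have h1D : (1 : ℚ) ∈ stmt11Dset e n := by rw [stmt11_mem_Dset]; exact Or.inr (Or.inl rfl)
    set Lo := (stmt11Dset e n).filter (· < r) with hLodef
    have hLo : Lo.Nonempty := ⟨0, by simp [hLodef, Finset.mem_filter, h0D, hr0]⟩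
    set lo := Lo.max' hLo with hlodef
    have hloD : lo ∈ stmt11Dset e n ∧ lo < r := by
      exact Finset.mem_filter.mp (Lo.max'_mem hLo)
    have hlomax : ∀ p ∈ stmt11Dset e n, p < r → p ≤ lo := fun p hp hpr =>
      Lo.le_max' p (by simp [hLodef, Finset.mem_filter, hp, hpr])
    set Hi := (stmt11Dset e n).filter (r < ·) with hHidef
    have hHi : Hi.Nonempty := ⟨1, by simp [hHidef, Finset.mem_filter, h1D, hr1]⟩
    set hi := Hi.min' hHi with hhidef
    have hhiD : hi ∈ stmt11Dset e n ∧ r < hi := by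
      exact Finset.mem_filter.mp (Hi.min'_mem hHi)
    have hhimin : ∀ q ∈ stmt11Dset e n, r < q → hi ≤ q := fun q hq hrq =>
      Hi.min'_le q (by simp [hHidef, Finset.mem_filter, hq, hrq])
    have hlohi : lo < hi := lt_trans hloD.2 hhiD.2
    have hlhd_lohi : lhd (h lo) (h hi) := hhl lo hloD.1 hi hhiD.1 hlohi
    have hloI : h lo ∈ I := hhI lo hloD.1 (ne_of_lt (lt_trans hloD.2 hr1))
    obtain ⟨c, hcI, hc1, hc2⟩ := i1 (h lo) (h hi) hloI hlhd_lohi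
    have hupd : ∀ p : ℚ, p ≠ r → Function.update h r c p = h p := fun p hp =>
      Function.update_of_ne hp _ _
    have hne_of_mem : ∀ p ∈ stmt11Dset e n, p ≠ r := by
      intro p hp hpr; exact hrD (hpr ▸ hp)
    refine ⟨Function.update h r c, ⟨?_, ?_, ?_, ?_⟩, fun p hp => hupd p (hne_of_mem p hp)⟩
    · rw [hupd 0 (ne_of_lt hr0)]; exact hh0
    · rw [hupd 1 (Ne.symm (ne_of_lt hr1))]; exact hh1
    · intro p hp hp1
      rcases (stmt11_mem_Dset_succ e n p).mp hp with hpD | ⟨rfl, _⟩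
      · rw [hupd p (hne_of_mem p hpD)]; exact hhI p hpD hp1
      · rw [Function.update_self]; exact hcI
    · intro p hp q hq hpq
      rcases (stmt11_mem_Dset_succ e n p).mp hp with hpD | ⟨hpr, _⟩
      · rcases (stmt11_mem_Dset_succ e n q).mp hq with hqD | ⟨hqr, _⟩
        · rw [hupd p (hne_of_mem p hpD), hupd q (hne_of_mem q hqD)]
          exact hhl p hpD q hqD hpq
        · subst hqr
          rw [hupd p (hne_of_mem p hpD), Function.update_self]
          have hple : p ≤ lo := hlomax p hpD hpq
          rcases eq_or_lt_of_le hple with rfl | hplt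
          · exact hc1
          · exact htrans _ _ _ (hhl p hpD lo hloD.1 hplt) hc1
      · subst hpr
        rcases (stmt11_mem_Dset_succ e n q).mp hq with hqD | ⟨hqr, _⟩
        · rw [Function.update_self, hupd q (hne_of_mem q hqD)]
          have hqge : hi ≤ q := hhimin q hqD hpq
          rcases eq_or_lt_of_le hqge with hhq | hhq
          · rw [← hhq]; exact hc2
          · exact htrans _ _ _ hc2 (hhl hi hhiD.1 q hqD hhq)
        · rw [hqr] at hpq
          exact absurd hpq (lt_irrefl _)
  · refine ⟨h, ⟨hh0, hh1, ?_, ?_⟩, fun p _ => rfl⟩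
    · intro p hp hp1
      rcases (stmt11_mem_Dset_succ e n p).mp hp with hpD | ⟨rfl, hlt⟩
      · exact hhI p hpD hp1
      · have : e n ∈ stmt11Dset e n := by
          by_contra hc
          exact hcase ⟨hlt, hc⟩
        exact hhI _ this hp1
    · intro p hp q hq hpq
      have hmem : ∀ s : ℚ, s ∈ stmt11Dset e (n + 1) → s ∈ stmt11Dset e n := by
        intro s hs
        rcases (stmt11_mem_Dset_succ e n s).mp hs with hsD | ⟨rfl, hlt⟩
        · exact hsD
        · by_contra hc
          exact hcase ⟨hlt, hc⟩
      exact hhl p (hmem p hp) q (hmem q hq) hpq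

/-- Key lemma: from `a ∈ I` and `lhd a x`, build a ℚ-indexed interpolating chain. -/
lemma stmt11_key {A : Type*} [Preorder A] (lhd : A → A → Prop) (I : Set A)
    (dv2 : ∀ a b : A, lhd a b → a ≤ b)
    (dv3 : ∀ a b c d : A, a ≤ b → lhd b c → c ≤ d → lhd a d)
    (i1 : ∀ a b : A, a ∈ I → lhd a b → ∃ c ∈ I, lhd a c ∧ lhd c b)
    (a x : A) (ha : a ∈ I) (hax : lhd a x) :
    ∃ c : ℚ → A, a ≤ c 0 ∧ c 1 ≤ x ∧
      ∀ p q : ℚ, 0 ≤ p → p < q → q ≤ 1 → lhd (c p) (c q) := by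
  classical
  have htrans : ∀ a b c : A, lhd a b → lhd b c → lhd a c := fun a b c h1 h2 =>
    dv3 a b c c (dv2 _ _ h1) h2 le_rfl
  set e : ℕ → ℚ := fun n => (Denumerable.eqv ℚ).symm n with hedef
  set idx : ℚ → ℕ := fun p => Denumerable.eqv ℚ p with hidxdef
  have heidx : ∀ p : ℚ, e (idx p) = p := fun p => Equiv.symm_apply_apply _ _
  choose F hF1 hF2 using stmt11_inv_step lhd I htrans i1 a x e
  let g : ∀ n : ℕ, { h : ℚ → A // stmt11Inv lhd I a x e h n } := fun n =>
    Nat.rec ⟨fun p => if p = 1 then x else a, stmt11_inv_zero lhd I a x e ha hax⟩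
      (fun m ih => ⟨F m ih.1 ih.2, hF1 m ih.1 ih.2⟩) n
  have hgsucc : ∀ n : ℕ, (g (n + 1)).1 = F n (g n).1 (g n).2 := fun n => rfl
  have agree : ∀ m n : ℕ, m ≤ n → ∀ p ∈ stmt11Dset e m, (g n).1 p = (g m).1 p := by
    intro m n hmn
    induction n with
    | zero => intro p _; rw [Nat.le_zero.mp hmn]
    | succ n ihn =>
      rcases eq_or_lt_of_le hmn with rfl | hlt
      · intro p _; rfl
      · intro p hp
        have hmn' : m ≤ n := Nat.lt_succ_iff.mp hlt
        rw [hgsucc n, hF2 n (g n).1 (g n).2 p (stmt11_Dset_mono e hmn' hp)]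
        exact ihn hmn' p hp
  set c : ℚ → A := fun p => (g (idx p + 1)).1 p with hcdef
  have hmemD : ∀ p : ℚ, 0 ≤ p → p ≤ 1 → ∀ n : ℕ, idx p < n → p ∈ stmt11Dset e n := by
    intro p hp0 hp1 n hn
    rw [stmt11_mem_Dset]
    rcases eq_or_lt_of_le hp0 with rfl | hp0'
    · exact Or.inl rfl
    rcases eq_or_lt_of_le hp1 with rfl | hp1'
    · exact Or.inr (Or.inl rfl)
    exact Or.inr (Or.inr ⟨⟨idx p, hn, heidx p⟩, hp0', hp1'⟩)
  have hcval : ∀ p : ℚ, 0 ≤ p → p ≤ 1 → ∀ n : ℕ, idx p < n → (g n).1 p = c p := by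
    intro p hp0 hp1 n hn
    exact agree (idx p + 1) n hn p (hmemD p hp0 hp1 (idx p + 1) (Nat.lt_succ_self _))
  refine ⟨c, ?_, ?_, ?_⟩
  · have := ((g (idx (0 : ℚ) + 1)).2).1
    rw [hcdef]; exact le_of_eq this.symm
  · have := ((g (idx (1 : ℚ) + 1)).2).2.1
    rw [hcdef]; exact le_of_eq this
  · intro p q hp0 hpq hq1
    have hp1 : p ≤ 1 := le_of_lt (lt_of_lt_of_le hpq hq1)
    have hq0 : 0 ≤ q := le_of_lt (lt_of_le_of_lt hp0 hpq)
    set N := max (idx p) (idx q) + 1 with hNdef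
    have hpN : idx p < N := Nat.lt_succ_of_le (le_max_left _ _)
    have hqN : idx q < N := Nat.lt_succ_of_le (le_max_right _ _)
    have := ((g N).2).2.2.2 p (hmemD p hp0 hp1 N hpN) q (hmemD q hq0 hq1 N hqN) hpq
    rwa [hcval p hp0 hp1 N hpN, hcval q hq0 hq1 N hqN] at this

theorem stmt11 {A : Type*} [CompleteBooleanAlgebra A] (lhd : A → A → Prop) (I : Set A)
    (dv1 : lhd ⊤ ⊤)
    (dv2 : ∀ a b : A, lhd a b → a ≤ b)
    (dv3 : ∀ a b c d : A, a ≤ b → lhd b c → c ≤ d → lhd a d)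
    (dv4 : ∀ a b c : A, lhd a b → lhd a c → lhd a (b ⊓ c))
    (dv5 : ∀ a b : A, lhd a b → lhd bᶜ aᶜ)
    (hne : I.Nonempty)
    (hdown : ∀ a b : A, b ∈ I → a ≤ b → a ∈ I)
    (hjoin : ∀ a b : A, a ∈ I → b ∈ I → a ⊔ b ∈ I)
    (i1 : ∀ a b : A, a ∈ I → lhd a b → ∃ c ∈ I, lhd a c ∧ lhd c b)
    (i2 : ∀ a b : A, (∀ c ∈ I, lhd (a ⊓ c) (b ⊔ cᶜ)) → lhd a b)
    (i3 : ∀ b : A, b ≠ ⊥ → ∃ a ∈ I, a ≠ ⊥ ∧ lhd a b)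
    (prec : A → A → Prop)
    (hprec : ∀ a b : A, prec a b ↔ ∃ c : ℚ → A, a ≤ c 0 ∧ c 1 ≤ b ∧
      ∀ p q : ℚ, 0 ≤ p → p < q → q ≤ 1 → lhd (c p) (c q))
    :
    prec ⊤ ⊤ ∧
    (∀ a b : A, prec a b → a ≤ b) ∧
    (∀ a b c d : A, a ≤ b → prec b c → c ≤ d → prec a d) ∧
    (∀ a b c : A, prec a b → prec a c → prec a (b ⊓ c)) ∧
    (∀ a b : A, prec a b → prec bᶜ aᶜ) ∧
    (∀ a b : A, prec a b → ∃ c, prec a c ∧ prec c b) ∧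
    (∀ b : A, b = sSup {a : A | prec a b}) := by
  have pdv2 : ∀ a b : A, prec a b → a ≤ b := by
    intro a b h
    obtain ⟨c, h0, h1, hc⟩ := (hprec a b).mp h
    have : c 0 ≤ c 1 := dv2 _ _ (hc 0 1 le_rfl (by norm_num) le_rfl)
    exact le_trans h0 (le_trans this h1)
  have pdv3 : ∀ a b c d : A, a ≤ b → prec b c → c ≤ d → prec a d := by
    intro a b c d hab h hcd
    obtain ⟨ch, h0, h1, hc⟩ := (hprec b c).mp h
    exact (hprec a d).mpr ⟨ch, le_trans hab h0, le_trans h1 hcd, hc⟩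
  refine ⟨?_, pdv2, pdv3, ?_, ?_, ?_, ?_⟩
  · exact (hprec ⊤ ⊤).mpr ⟨fun _ => ⊤, le_rfl, le_rfl, fun p q _ _ _ => dv1⟩
  · -- DV4
    intro a b c h1 h2
    obtain ⟨cb, hb0, hb1, hcb⟩ := (hprec a b).mp h1
    obtain ⟨cc, hc0, hc1, hcc⟩ := (hprec a c).mp h2
    refine (hprec a (b ⊓ c)).mpr ⟨fun p => cb p ⊓ cc p, le_inf hb0 hc0,
      inf_le_inf hb1 hc1, fun p q hp hpq hq => ?_⟩
    exact dv4 _ _ _ (dv3 _ _ _ _ inf_le_left (hcb p q hp hpq hq) le_rfl)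
      (dv3 _ _ _ _ inf_le_right (hcc p q hp hpq hq) le_rfl)
  · -- DV5
    intro a b h
    obtain ⟨c, h0, h1, hc⟩ := (hprec a b).mp h
    refine (hprec bᶜ aᶜ).mpr ⟨fun p => (c (1 - p))ᶜ, ?_, ?_, fun p q hp hpq hq => ?_⟩
    · show bᶜ ≤ (c (1 - 0))ᶜ
      rw [(by norm_num : (1 : ℚ) - 0 = 1)]; exact compl_le_compl h1
    · show (c (1 - 1))ᶜ ≤ aᶜ
      rw [(by norm_num : (1 : ℚ) - 1 = 0)]; exact compl_le_compl h0
    · exact dv5 _ _ (hc (1 - q) (1 - p) (by linarith) (by linarith) (by linarith))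
  · -- DV6 (interpolation)
    intro a b h
    obtain ⟨c, h0, h1, hc⟩ := (hprec a b).mp h
    refine ⟨c (1 / 2), ?_, ?_⟩
    · refine (hprec a (c (1 / 2))).mpr ⟨fun p => c (p / 2), ?_, ?_, fun p q hp hpq hq => ?_⟩
      · show a ≤ c (0 / 2)
        rw [(by norm_num : (0 : ℚ) / 2 = 0)]; exact h0
      · exact le_rfl
      · exact hc (p / 2) (q / 2) (by linarith) (by linarith) (by linarith)
    · refine (hprec (c (1 / 2)) b).mpr
        ⟨fun p => c ((p + 1) / 2), ?_, ?_, fun p q hp hpq hq => ?_⟩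
      · show c (1 / 2) ≤ c ((0 + 1) / 2)
        rw [(by norm_num : ((0 : ℚ) + 1) / 2 = 1 / 2)]
      · show c ((1 + 1) / 2) ≤ b
        rw [(by norm_num : ((1 : ℚ) + 1) / 2 = 1)]; exact h1
      · exact hc ((p + 1) / 2) ((q + 1) / 2) (by linarith) (by linarith) (by linarith)
  · -- DV7
    intro b
    refine le_antisymm ?_ (sSup_le fun a ha => pdv2 a b ha)
    by_contra hb
    have hne' : b ⊓ (sSup {a : A | prec a b})ᶜ ≠ ⊥ := by
      intro hbot
      apply hb
      exact Disjoint.le_of_codisjoint (disjoint_iff.mpr hbot)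
        isCompl_compl.symm.codisjoint
    obtain ⟨a, haI, habot, hal⟩ := i3 _ hne'
    have halb : lhd a b := dv3 a a _ b le_rfl hal inf_le_left
    obtain ⟨ch, h0, h1, hc⟩ := stmt11_key lhd I dv2 dv3 i1 a b haI halb
    have hprecab : prec a b := (hprec a b).mpr ⟨ch, h0, h1, hc⟩
    have h1' : a ≤ sSup {a : A | prec a b} := le_sSup hprecab
    have h2' : a ≤ (sSup {a : A | prec a b})ᶜ :=
      le_trans (dv2 _ _ hal) inf_le_right
    exact habot (le_bot_iff.mp (by simpa using le_inf h1' h2'))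
end

section
/- In a Dimov algebra (A, ◁, I), with ≺ the interpolating relation defined via rational-indexed interpolating sequences for ◁, the ideal I is round with respect to ≺ (every a ∈ I satisfies a ≺ b for some b ∈ I) and ⋁ I = 1. -/
noncomputable def dseq (n : ℕ) : ℚ :=
  if n = 0 then 0 else if n = 1 then 1 else ((Encodable.decode (α := ℚ) (n - 2)).getD 0)

lemma dseq_zero : dseq 0 = 0 := by simp [dseq]
lemma dseq_one : dseq 1 = 1 := by simp [dseq]
lemma dseq_encode (q : ℚ) : dseq (Encodable.encode q + 2) = q := by
  have h0 : Encodable.encode q + 2 ≠ 0 := by omega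
  have h1 : Encodable.encode q + 2 ≠ 1 := by omega
  simp only [dseq, if_neg h0, if_neg h1, Nat.add_sub_cancel, Encodable.encodek, Option.getD_some]

open Classical in
noncomputable def dstep {A : Type*} (lhd : A → A → Prop) (I : Set A) (a b : A)
    (n : ℕ) (f : ℚ → A) : ℚ → A :=
  if n = 0 then Function.update f 0 a
  else if n = 1 then Function.update f 1 b
  else if h : (∀ k, k < n → dseq k ≠ dseq n) ∧ ∃ m, m ∈ I ∧
      (∀ k, k < n → 0 ≤ dseq k → dseq k < dseq n → lhd (f (dseq k)) m) ∧
      (∀ l, l < n → dseq n < dseq l → dseq l ≤ 1 → lhd m (f (dseq l)))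
    then Function.update f (dseq n) h.2.choose else f

noncomputable def dT {A : Type*} (lhd : A → A → Prop) (I : Set A) (a b : A) : ℕ → ℚ → A
  | 0 => fun _ => a
  | (n+1) => dstep lhd I a b n (dT lhd I a b n)

lemma dimov_chain {A : Type*} [CompleteBooleanAlgebra A] (lhd : A → A → Prop) (I : Set A)
    (dv2 : ∀ a b : A, lhd a b → a ≤ b)
    (dv3 : ∀ a b c d : A, a ≤ b → lhd b c → c ≤ d → lhd a d)
    (i1 : ∀ a b : A, a ∈ I → lhd a b → ∃ c ∈ I, lhd a c ∧ lhd c b)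
    (a b : A) (ha : a ∈ I) (hab : lhd a b) :
    ∃ c : ℚ → A, a ≤ c 0 ∧ c 1 ≤ b ∧
      ∀ p q : ℚ, 0 ≤ p → p < q → q ≤ 1 → lhd (c p) (c q) := by
  classical
  have htrans : ∀ x y z : A, lhd x y → lhd y z → lhd x z := fun x y z h1 h2 =>
    dv3 x y z z (dv2 x y h1) h2 le_rfl
  set T := dT lhd I a b with hT
  have inv : ∀ n : ℕ, (1 ≤ n → T n 0 = a) ∧ (2 ≤ n → T n 1 = b) ∧
      (∀ k l : ℕ, k < n → l < n → 0 ≤ dseq k → dseq k < dseq l → dseq l ≤ 1 →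
        lhd (T n (dseq k)) (T n (dseq l))) ∧
      (∀ k : ℕ, k < n → 0 ≤ dseq k → dseq k < 1 → T n (dseq k) ∈ I) := by
    intro n
    induction n with
    | zero =>
      exact ⟨fun h => absurd h (by omega), fun h => absurd h (by omega),
        fun k l hk => absurd hk (by omega), fun k hk => absurd hk (by omega)⟩
    | succ n ih =>
      obtain ⟨ih0, ih1, ihA, ihI⟩ := ih
      rcases Nat.lt_or_ge n 2 with hn2 | hn2
      · interval_cases n
        · -- n = 0 : T 1 = update (fun _ => a) 0 a
          have hT1 : T 1 = Function.update (fun _ : ℚ => a) 0 a := rfl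
          refine ⟨fun _ => by rw [hT1, Function.update_self], fun h => absurd h (by omega),
            ?_, ?_⟩
          · intro k l hk hl _ hkl _
            interval_cases k
            interval_cases l
            exact absurd hkl (lt_irrefl _)
          · intro k hk _ _
            interval_cases k
            rw [dseq_zero, hT1, Function.update_self]
            exact ha
        · -- n = 1 : T 2 = update (T 1) 1 b
          have hT2 : T 2 = Function.update (T 1) 1 b := by
            show dstep lhd I a b 1 (T 1) = _
            simp [dstep]
          have h10 : T 1 0 = a := ih0 le_rfl
          have h20 : T 2 0 = a := by
            rw [hT2, Function.update_of_ne (by norm_num), h10]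
          have h21 : T 2 1 = b := by rw [hT2, Function.update_self]
          refine ⟨fun _ => h20, fun _ => h21, ?_, ?_⟩
          · intro k l hk hl _ hkl _
            interval_cases k <;> interval_cases l <;>
              simp only [dseq_zero, dseq_one] at hkl ⊢
            · exact absurd hkl (lt_irrefl _)
            · rw [h20, h21]; exact hab
            · exact absurd hkl (by norm_num)
            · exact absurd hkl (lt_irrefl _)
          · intro k hk _ hk1
            interval_cases k
            · rw [dseq_zero, h20]; exact ha
            · rw [dseq_one] at hk1; exact absurd hk1 (lt_irrefl _)
      · -- n ≥ 2
        have hn0 : n ≠ 0 := by omega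
        have hn1 : n ≠ 1 := by omega
        set f := T n with hf
        by_cases hfresh : ∀ k, k < n → dseq k ≠ dseq n
        · have hne0 : dseq n ≠ 0 := fun h => hfresh 0 (by omega) (by rw [dseq_zero, h])
          have hne1 : dseq n ≠ 1 := fun h => hfresh 1 (by omega) (by rw [dseq_one, h])
          by_cases hin : 0 < dseq n ∧ dseq n < 1
          · -- construct the interpolant
            have h0mem : 0 ∈ (Finset.range n).filter fun k => dseq k < dseq n :=
              Finset.mem_filter.2 ⟨Finset.mem_range.2 (by omega),
                by rw [dseq_zero]; exact hin.1⟩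
            have h1mem : 1 ∈ (Finset.range n).filter fun k => dseq n < dseq k :=
              Finset.mem_filter.2 ⟨Finset.mem_range.2 (by omega),
                by rw [dseq_one]; exact hin.2⟩
            obtain ⟨i, hiF, hiMax⟩ := Finset.exists_max_image
              ((Finset.range n).filter fun k => dseq k < dseq n) dseq ⟨0, h0mem⟩
            obtain ⟨j, hjF, hjMin⟩ := Finset.exists_min_image
              ((Finset.range n).filter fun k => dseq n < dseq k) dseq ⟨1, h1mem⟩
            have hi0 : (0:ℚ) ≤ dseq i := by
              have := hiMax 0 h0mem; rwa [dseq_zero] at this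
            have hj1 : dseq j ≤ 1 := by
              have := hjMin 1 h1mem; rwa [dseq_one] at this
            rw [Finset.mem_filter, Finset.mem_range] at hiF hjF
            have hfI : f (dseq i) ∈ I := ihI i hiF.1 hi0 (lt_trans hiF.2 hin.2)
            have hij : lhd (f (dseq i)) (f (dseq j)) :=
              ihA i j hiF.1 hjF.1 hi0 (lt_trans hiF.2 hjF.2) hj1
            obtain ⟨m, hmI, hm1, hm2⟩ := i1 _ _ hfI hij
            have hex : ∃ m, m ∈ I ∧
                (∀ k, k < n → 0 ≤ dseq k → dseq k < dseq n → lhd (f (dseq k)) m) ∧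
                (∀ l, l < n → dseq n < dseq l → dseq l ≤ 1 → lhd m (f (dseq l))) := by
              refine ⟨m, hmI, ?_, ?_⟩
              · intro k hk hk0 hkn
                have hle : dseq k ≤ dseq i :=
                  hiMax k (Finset.mem_filter.2 ⟨Finset.mem_range.2 hk, hkn⟩)
                rcases eq_or_lt_of_le hle with heq | hlt
                · rw [heq]; exact hm1
                · exact htrans _ _ _
                    (ihA k i hk hiF.1 hk0 hlt (le_of_lt (lt_trans hiF.2 hin.2))) hm1
              · intro l hl hnl hl1
                have hle : dseq j ≤ dseq l :=
                  hjMin l (Finset.mem_filter.2 ⟨Finset.mem_range.2 hl, hnl⟩)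
                rcases eq_or_lt_of_le hle with heq | hlt
                · rw [← heq]; exact hm2
                · exact htrans _ _ _ hm2
                    (ihA j l hjF.1 hl (le_of_lt (lt_trans hin.1 hjF.2)) hlt hl1)
            have hyp : (∀ k, k < n → dseq k ≠ dseq n) ∧ ∃ m, m ∈ I ∧
                (∀ k, k < n → 0 ≤ dseq k → dseq k < dseq n → lhd (f (dseq k)) m) ∧
                (∀ l, l < n → dseq n < dseq l → dseq l ≤ 1 → lhd m (f (dseq l))) :=
              ⟨hfresh, hex⟩
            have hstep : T (n+1) = Function.update f (dseq n) hyp.2.choose := by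
              show dstep lhd I a b n f = _
              rw [dstep, if_neg hn0, if_neg hn1, dif_pos hyp]
            obtain ⟨hcI, hc1, hc2⟩ := hyp.2.choose_spec
            refine ⟨?_, ?_, ?_, ?_⟩
            · intro _
              rw [hstep, Function.update_of_ne (Ne.symm hne0)]
              exact ih0 (by omega)
            · intro _
              rw [hstep, Function.update_of_ne (Ne.symm hne1)]
              exact ih1 hn2
            · intro k l hk hl hk0 hkl hl1
              rcases Nat.lt_or_ge k n with hkn | hkn
              · rcases Nat.lt_or_ge l n with hln | hln
                · rw [hstep, Function.update_of_ne (hfresh k hkn),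
                    Function.update_of_ne (hfresh l hln)]
                  exact ihA k l hkn hln hk0 hkl hl1
                · have hln' : l = n := by omega
                  subst hln'
                  rw [hstep, Function.update_of_ne (hfresh k hkn), Function.update_self]
                  exact hc1 k hkn hk0 hkl
              · have hk' : dseq k = dseq n := by rw [show k = n from by omega]
                rcases Nat.lt_or_ge l n with hln | hln
                · rw [hstep, hk', Function.update_self, Function.update_of_ne (hfresh l hln)]
                  exact hc2 l hln (by rw [← hk']; exact hkl) hl1
                · have hl' : dseq l = dseq n := by rw [show l = n from by omega]
                  rw [hk', hl'] at hkl
                  exact absurd hkl (lt_irrefl _)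
            · intro k hk hk0 hk1
              rcases Nat.lt_or_ge k n with hkn | hkn
              · rw [hstep, Function.update_of_ne (hfresh k hkn)]
                exact ihI k hkn hk0 hk1
              · have : k = n := by omega
                subst this
                rw [hstep, Function.update_self]
                exact hcI
          · -- dseq n outside (0,1): any update is harmless
            have hout : dseq n < 0 ∨ 1 < dseq n := by
              rcases lt_trichotomy (dseq n) 0 with h | h | h
              · exact Or.inl h
              · exact absurd h hne0
              · rcases lt_trichotomy (dseq n) 1 with h' | h' | h'
                · exact absurd ⟨h, h'⟩ hin
                · exact absurd h' hne1
                · exact Or.inr h'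
            have hform : T (n+1) = f ∨
                ∃ v, T (n+1) = Function.update f (dseq n) v := by
              show dstep lhd I a b n f = f ∨
                ∃ v, dstep lhd I a b n f = Function.update f (dseq n) v
              rw [dstep, if_neg hn0, if_neg hn1]
              by_cases h : (∀ k, k < n → dseq k ≠ dseq n) ∧ ∃ m, m ∈ I ∧
                  (∀ k, k < n → 0 ≤ dseq k → dseq k < dseq n → lhd (f (dseq k)) m) ∧
                  (∀ l, l < n → dseq n < dseq l → dseq l ≤ 1 → lhd m (f (dseq l)))
              · exact Or.inr ⟨h.2.choose, dif_pos h⟩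
              · exact Or.inl (dif_neg h)
            have hval : ∀ q : ℚ, q ≠ dseq n → T (n+1) q = f q := by
              intro q hq
              rcases hform with h | ⟨v, h⟩
              · rw [h]
              · rw [h, Function.update_of_ne hq]
            refine ⟨?_, ?_, ?_, ?_⟩
            · intro _; rw [hval 0 (Ne.symm hne0)]; exact ih0 (by omega)
            · intro _; rw [hval 1 (Ne.symm hne1)]; exact ih1 hn2
            · intro k l hk hl hk0 hkl hl1
              have hkq : dseq k ≠ dseq n := by
                intro h
                rcases hout with ho | ho
                · rw [h] at hk0; linarith
                · rw [h] at hkl; linarith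
              have hlq : dseq l ≠ dseq n := by
                intro h
                rcases hout with ho | ho
                · rw [h] at hkl; linarith
                · rw [h] at hl1; linarith
              have hkn : k < n := by
                by_contra h
                exact hkq (by rw [show k = n from by omega])
              have hln : l < n := by
                by_contra h
                exact hlq (by rw [show l = n from by omega])
              rw [hval _ hkq, hval _ hlq]
              exact ihA k l hkn hln hk0 hkl hl1
            · intro k hk hk0 hk1
              have hkq : dseq k ≠ dseq n := by
                intro h
                rcases hout with ho | ho
                · rw [h] at hk0; linarith
                · rw [h] at hk1; linarith
              have hkn : k < n := by
                by_contra h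
                exact hkq (by rw [show k = n from by omega])
              rw [hval _ hkq]
              exact ihI k hkn hk0 hk1
        · -- not fresh : dseq n is a duplicate, no update
          have hstep : T (n+1) = f := by
            show dstep lhd I a b n f = f
            rw [dstep, if_neg hn0, if_neg hn1, dif_neg]
            intro h
            exact hfresh h.1
          push_neg at hfresh
          obtain ⟨k0, hk0n, hk0e⟩ := hfresh
          refine ⟨fun _ => by rw [hstep]; exact ih0 (by omega),
            fun _ => by rw [hstep]; exact ih1 hn2, ?_, ?_⟩
          · intro k l hk hl hkq hkl hl1
            rw [hstep]
            rcases Nat.lt_or_ge k n with hkn | hkn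
            · rcases Nat.lt_or_ge l n with hln | hln
              · exact ihA k l hkn hln hkq hkl hl1
              · have : l = n := by omega
                subst this
                rw [← hk0e]
                exact ihA k k0 hkn hk0n hkq (by rw [hk0e]; exact hkl) (by rw [hk0e]; exact hl1)
            · have hk' : dseq k = dseq k0 := by rw [hk0e, show k = n from by omega]
              rcases Nat.lt_or_ge l n with hln | hln
              · rw [hk']
                exact ihA k0 l hk0n hln (by rw [← hk']; exact hkq)
                  (by rw [← hk']; exact hkl) hl1
              · have hl' : dseq l = dseq k0 := by rw [hk0e, show l = n from by omega]
                rw [hk', hl'] at hkl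
                exact absurd hkl (lt_irrefl _)
          · intro k hk hkq hk1
            rw [hstep]
            rcases Nat.lt_or_ge k n with hkn | hkn
            · exact ihI k hkn hkq hk1
            · have : k = n := by omega
              subst this
              rw [← hk0e]
              exact ihI k0 hk0n (by rw [hk0e]; exact hkq) (by rw [hk0e]; exact hk1)
  -- stability
  have stab : ∀ n m : ℕ, n ≤ m → ∀ k, k < n → T m (dseq k) = T n (dseq k) := by
    intro n m hnm
    induction m, hnm using Nat.le_induction with
    | base => intro k _; rfl
    | succ m hnm ihm =>
      intro k hkn
      have hkm : k < m := by omega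
      have step : T (m+1) = dstep lhd I a b m (T m) := rfl
      rw [step, dstep]
      by_cases hm0 : m = 0
      · omega
      rw [if_neg hm0]
      by_cases hm1 : m = 1
      · subst hm1
        rw [if_pos rfl]
        have : k = 0 := by omega
        subst this
        rw [Function.update_of_ne (by rw [dseq_zero]; norm_num)]
        exact ihm 0 hkn
      rw [if_neg hm1]
      by_cases h : (∀ k, k < m → dseq k ≠ dseq m) ∧ ∃ mm, mm ∈ I ∧
          (∀ k, k < m → 0 ≤ dseq k → dseq k < dseq m → lhd (T m (dseq k)) mm) ∧
          (∀ l, l < m → dseq m < dseq l → dseq l ≤ 1 → lhd mm (T m (dseq l)))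
      · rw [dif_pos h, Function.update_of_ne (h.1 k hkm)]
        exact ihm k hkn
      · rw [dif_neg h]
        exact ihm k hkn
  -- the chain
  refine ⟨fun q => T (Encodable.encode q + 3) q, ?_, ?_, ?_⟩
  · exact le_of_eq ((inv _).1 (by omega)).symm
  · exact le_of_eq ((inv _).2.1 (by omega))
  · intro p q hp hpq hq1
    set kp := Encodable.encode p + 2 with hkp
    set kq := Encodable.encode q + 2 with hkq
    set N := max kp kq + 1 with hN
    have hkpN : kp < N := by omega
    have hkqN : kq < N := by omega
    have hcp : T (kp + 1) p = T N p := by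
      have := stab (kp+1) N (by omega) kp (by omega)
      rw [dseq_encode] at this
      exact this.symm
    have hcq : T (kq + 1) q = T N q := by
      have := stab (kq+1) N (by omega) kq (by omega)
      rw [dseq_encode] at this
      exact this.symm
    show lhd (T (kp+1) p) (T (kq+1) q)
    rw [hcp, hcq]
    have := (inv N).2.2.1 kp kq hkpN hkqN
      (by rw [dseq_encode]; exact hp) (by rw [dseq_encode, dseq_encode]; exact hpq)
      (by rw [dseq_encode]; exact hq1)
    rwa [dseq_encode, dseq_encode] at this

theorem stmt12 {A : Type*} [CompleteBooleanAlgebra A] (lhd : A → A → Prop) (I : Set A)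
    (dv1 : lhd ⊤ ⊤)
    (dv2 : ∀ a b : A, lhd a b → a ≤ b)
    (dv3 : ∀ a b c d : A, a ≤ b → lhd b c → c ≤ d → lhd a d)
    (dv4 : ∀ a b c : A, lhd a b → lhd a c → lhd a (b ⊓ c))
    (dv5 : ∀ a b : A, lhd a b → lhd bᶜ aᶜ)
    (hne : I.Nonempty)
    (hdown : ∀ a b : A, b ∈ I → a ≤ b → a ∈ I)
    (hjoin : ∀ a b : A, a ∈ I → b ∈ I → a ⊔ b ∈ I)
    (i1 : ∀ a b : A, a ∈ I → lhd a b → ∃ c ∈ I, lhd a c ∧ lhd c b)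
    (i2 : ∀ a b : A, (∀ c ∈ I, lhd (a ⊓ c) (b ⊔ cᶜ)) → lhd a b)
    (i3 : ∀ b : A, b ≠ ⊥ → ∃ a ∈ I, a ≠ ⊥ ∧ lhd a b)
    (prec : A → A → Prop)
    (hprec : ∀ a b : A, prec a b ↔ ∃ c : ℚ → A, a ≤ c 0 ∧ c 1 ≤ b ∧
      ∀ p q : ℚ, 0 ≤ p → p < q → q ≤ 1 → lhd (c p) (c q))
    :
    (∀ a ∈ I, ∃ b ∈ I, prec a b) ∧ sSup I = ⊤ := by
  constructor
  · intro a haI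
    have hatop : lhd a ⊤ := dv3 a ⊤ ⊤ ⊤ le_top dv1 le_rfl
    obtain ⟨b, hbI, hab, _⟩ := i1 a ⊤ haI hatop
    exact ⟨b, hbI, (hprec a b).2 (dimov_chain lhd I dv2 dv3 i1 a b haI hab)⟩
  · by_contra h
    have hne' : (sSup I)ᶜ ≠ ⊥ := fun hbot => h (compl_eq_bot.mp hbot)
    obtain ⟨a, haI, ha0, hal⟩ := i3 _ hne'
    have h1 : a ≤ sSup I := le_sSup haI
    have h2 : a ≤ (sSup I)ᶜ := dv2 _ _ hal
    have h3 : a ≤ ⊥ := by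
      have := le_inf h1 h2
      rwa [inf_compl_eq_bot] at this
    exact ha0 (le_bot_iff.mp h3)
end

section
/- Let α : A → B be a locally compact de Vries extension and define a ◁ b iff (a ∧ c) ≺ (b ∨ ¬c) for all c ∈ I_α. Then ◁ satisfies axioms (DV1)–(DV5) and I_α satisfies axioms (I1)–(I3), so (A, ◁, I_α) is a Dimov algebra. -/
theorem stmt14 {A B : Type*} [CompleteBooleanAlgebra A] [CompleteBooleanAlgebra B]
    [IsAtomic B] (prec : A → A → Prop) (α : A → B)
    (dv1 : prec ⊤ ⊤)
    (dv2 : ∀ a b : A, prec a b → a ≤ b)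
    (dv3 : ∀ a b c d : A, a ≤ b → prec b c → c ≤ d → prec a d)
    (dv4 : ∀ a b c : A, prec a b → prec a c → prec a (b ⊓ c))
    (dv5 : ∀ a b : A, prec a b → prec bᶜ aᶜ)
    (dv6 : ∀ a b : A, prec a b → ∃ c, prec a c ∧ prec c b)
    (dv7 : ∀ b : A, b = sSup {a : A | prec a b})
    (hinj : Function.Injective α)
    (m1 : α ⊥ = ⊥)
    (m2 : ∀ a b : A, α (a ⊓ b) = α a ⊓ α b)
    (m3 : ∀ a b : A, prec a b → (α aᶜ)ᶜ ≤ α b)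
    (m4 : ∀ b : A, α b = sSup (α '' {a : A | prec a b}))
    (hdense : ∀ y : B, ∃ T : Set (Set A), y = sSup ((fun S => sInf (α '' S)) '' T))
    (hlc : ∀ b : A, α b = sSup (α '' {a : A | IsAlphaCompact α a ∧ prec a b}))
    (lhd : A → A → Prop)
    (hlhd : ∀ a b : A, lhd a b ↔ ∀ c : A, IsAlphaCompact α c → prec (a ⊓ c) (b ⊔ cᶜ)) :
    lhd ⊤ ⊤ ∧
    (∀ a b : A, lhd a b → a ≤ b) ∧
    (∀ a b c d : A, a ≤ b → lhd b c → c ≤ d → lhd a d) ∧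
    (∀ a b c : A, lhd a b → lhd a c → lhd a (b ⊓ c)) ∧
    (∀ a b : A, lhd a b → lhd bᶜ aᶜ) ∧
    (∀ a b : A, IsAlphaCompact α a → lhd a b →
      ∃ c : A, IsAlphaCompact α c ∧ lhd a c ∧ lhd c b) ∧
    (∀ a b : A, (∀ c : A, IsAlphaCompact α c → lhd (a ⊓ c) (b ⊔ cᶜ)) → lhd a b) ∧
    (∀ b : A, b ≠ ⊥ → ∃ a : A, a ≠ ⊥ ∧ IsAlphaCompact α a ∧ lhd a b) := by
  -- basic consequences
  have atop : α ⊤ = ⊤ := by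
    have h := m3 ⊤ ⊤ dv1
    rw [compl_top, m1, compl_bot] at h
    exact le_antisymm le_top h
  have amono : ∀ x y : A, x ≤ y → α x ≤ α y := by
    intro x y h
    calc α x = α x ⊓ α y := by rw [← m2, inf_eq_left.2 h]
    _ ≤ α y := inf_le_right
  have arefl : ∀ x y : A, α x ≤ α y → x ≤ y := by
    intro x y h
    have h2 : α (x ⊓ y) = α x := by rw [m2]; exact inf_eq_left.2 h
    exact inf_eq_left.1 (hinj h2)
  have aself : ∀ x : A, α x ≤ (α xᶜ)ᶜ := by
    intro x
    have h : α x ⊓ α xᶜ = ⊥ := by rw [← m2, inf_compl_eq_bot, m1]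
    exact le_compl_iff_disjoint_right.2 (disjoint_iff.2 h)
  have prec_bot : ∀ d : A, prec ⊥ d := by
    intro d
    have h := dv5 ⊤ ⊤ dv1
    rw [compl_top] at h
    exact dv3 ⊥ ⊥ ⊥ d le_rfl h bot_le
  have prec_sup : ∀ x y d : A, prec x d → prec y d → prec (x ⊔ y) d := by
    intro x y d hx hy
    have h := dv4 dᶜ xᶜ yᶜ (dv5 _ _ hx) (dv5 _ _ hy)
    have h2 := dv5 _ _ h
    rwa [compl_inf, compl_compl, compl_compl, compl_compl] at h2
  have prec_top : ∀ k : A, prec k ⊤ := fun k => dv3 k ⊤ ⊤ ⊤ le_top dv1 le_rfl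
  have kbot : IsAlphaCompact α ⊥ := by
    intro S hS
    refine ⟨∅, Set.empty_subset S, Set.finite_empty, ?_⟩
    rw [compl_bot, atop, compl_top]
    exact bot_le
  have ksup : ∀ x y : A, IsAlphaCompact α x → IsAlphaCompact α y →
      IsAlphaCompact α (x ⊔ y) := by
    intro x y hx hy S hS
    have hd : (α (x ⊔ y)ᶜ)ᶜ = (α xᶜ)ᶜ ⊔ (α yᶜ)ᶜ := by
      rw [compl_sup, m2, compl_inf]
    rw [hd] at hS
    obtain ⟨T1, hT1S, hT1f, h1⟩ := hx S (le_trans le_sup_left hS)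
    obtain ⟨T2, hT2S, hT2f, h2⟩ := hy S (le_trans le_sup_right hS)
    refine ⟨T1 ∪ T2, Set.union_subset hT1S hT2S, hT1f.union hT2f, ?_⟩
    rw [hd, Set.image_union, sSup_union]
    exact sup_le_sup h1 h2
  have kfin : ∀ T : Set A, T.Finite → (∀ k ∈ T, IsAlphaCompact α k) →
      IsAlphaCompact α (sSup T) := by
    intro T hT
    refine Set.Finite.induction_on T hT ?_ ?_
    · intro _; simpa [sSup_empty] using kbot
    · intro x s hxs hs ih h
      rw [sSup_insert]
      exact ksup _ _ (h x (Set.mem_insert _ _))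
        (ih fun k hk => h k (Set.mem_insert_of_mem _ hk))
  have prec_fin : ∀ (d : A) (T : Set A), T.Finite → (∀ k ∈ T, prec k d) →
      prec (sSup T) d := by
    intro d T hT
    refine Set.Finite.induction_on T hT ?_ ?_
    · intro _; simpa [sSup_empty] using prec_bot d
    · intro x s hxs hs ih h
      rw [sSup_insert]
      exact prec_sup _ _ _ (h x (Set.mem_insert _ _))
        (ih fun k hk => h k (Set.mem_insert_of_mem _ hk))
  have himg : ∀ T : Set A, sSup (α '' T) ≤ α (sSup T) := by
    intro T
    refine sSup_le ?_
    rintro _ ⟨k, hk, rfl⟩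
    exact amono _ _ (le_sSup hk)
  -- DV2
  have hdv2 : ∀ a b : A, lhd a b → a ≤ b := by
    intro a b h
    refine arefl a b ?_
    rw [hlc a]
    refine sSup_le ?_
    rintro _ ⟨k, ⟨hk, hka⟩, rfl⟩
    have hkb : prec (a ⊓ k) (b ⊔ kᶜ) := (hlhd a b).1 h k hk
    have hk_le : k ≤ a := dv2 _ _ hka
    have h1 : k ≤ b ⊔ kᶜ := by
      have h2 := dv2 _ _ hkb
      rwa [inf_eq_right.2 hk_le] at h2
    have hkb2 : k ≤ b := by
      rw [← himp_eq] at h1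
      simpa using le_himp_iff.1 h1
    exact amono _ _ hkb2
  refine ⟨?_, hdv2, ?_, ?_, ?_, ?_, ?_, ?_⟩
  -- DV1
  · exact (hlhd ⊤ ⊤).2 fun c hc => dv3 (⊤ ⊓ c) ⊤ ⊤ (⊤ ⊔ cᶜ) le_top dv1 le_sup_left
  -- DV3
  · intro a b c d hab hbc hcd
    refine (hlhd a d).2 fun e he => ?_
    exact dv3 _ _ _ _ (inf_le_inf_right e hab) ((hlhd b c).1 hbc e he)
      (sup_le_sup_right hcd _)
  -- DV4
  · intro a b c h1 h2
    refine (hlhd a (b ⊓ c)).2 fun e he => ?_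
    have h := dv4 _ _ _ ((hlhd a b).1 h1 e he) ((hlhd a c).1 h2 e he)
    refine dv3 _ _ _ _ le_rfl h (le_of_eq ?_)
    exact (sup_inf_right b c eᶜ).symm
  -- DV5
  · intro a b h
    refine (hlhd bᶜ aᶜ).2 fun c hc => ?_
    have h2 := dv5 _ _ ((hlhd a b).1 h c hc)
    rwa [compl_sup, compl_compl, compl_inf] at h2
  -- I1
  · intro a b ha hab
    -- find compact e with (α aᶜ)ᶜ ≤ α e
    obtain ⟨Te, hTeS, hTef, hTe⟩ := ha {k | IsAlphaCompact α k ∧ prec k ⊤}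
      (by rw [← hlc ⊤, atop]; exact le_top)
    have heK : IsAlphaCompact α (sSup Te) :=
      kfin Te hTef fun k hk => (hTeS hk).1
    have hbe : (α aᶜ)ᶜ ≤ α (sSup Te) := hTe.trans (himg Te)
    have hae : a ≤ sSup Te := arefl _ _ ((aself a).trans hbe)
    -- C1 : (α aᶜ)ᶜ ≤ α b
    have h1 : prec a (b ⊔ (sSup Te)ᶜ) := by
      have h := (hlhd a b).1 hab (sSup Te) heK
      rwa [inf_eq_left.2 hae] at h
    have h2 : (α aᶜ)ᶜ ≤ α b := by
      have h3 := m3 _ _ h1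
      have h4 : (α aᶜ)ᶜ ≤ α ((b ⊔ (sSup Te)ᶜ) ⊓ sSup Te) := by
        rw [m2]; exact le_inf h3 hbe
      have h5 : (b ⊔ (sSup Te)ᶜ) ⊓ sSup Te = b ⊓ sSup Te := by
        rw [inf_sup_right, compl_inf_self, sup_bot_eq]
      rw [h5, m2] at h4
      exact h4.trans inf_le_left
    -- get compact c with prec c b and (α aᶜ)ᶜ ≤ α c
    obtain ⟨Tc, hTcS, hTcf, hTc⟩ := ha {k | IsAlphaCompact α k ∧ prec k b}
      (by rwa [← hlc b])
    have hcK : IsAlphaCompact α (sSup Tc) :=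
      kfin Tc hTcf fun k hk => (hTcS hk).1
    have hcb : prec (sSup Tc) b := prec_fin b Tc hTcf fun k hk => (hTcS hk).2
    have hbc : (α aᶜ)ᶜ ≤ α (sSup Tc) := hTc.trans (himg Tc)
    -- lhd a (sSup Tc) via m4
    obtain ⟨Tx, hTxS, hTxf, hTx⟩ := ha {x | prec x (sSup Tc)} (by rwa [← m4 _])
    have hx0c : prec (sSup Tx) (sSup Tc) := prec_fin _ Tx hTxf fun k hk => hTxS hk
    have hax0 : a ≤ sSup Tx := arefl _ _ ((aself a).trans (hTx.trans (himg Tx)))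
    refine ⟨sSup Tc, hcK, ?_, ?_⟩
    · exact (hlhd a (sSup Tc)).2 fun f hf =>
        dv3 _ _ _ _ (inf_le_left.trans hax0) hx0c le_sup_left
    · exact (hlhd (sSup Tc) b).2 fun f hf =>
        dv3 _ _ _ _ inf_le_left hcb le_sup_left
  -- I2
  · intro a b h
    refine (hlhd a b).2 fun c hc => ?_
    have h2 := (hlhd (a ⊓ c) (b ⊔ cᶜ)).1 (h c hc) c hc
    exact dv3 _ _ _ _ (le_inf le_rfl inf_le_right) h2 (sup_le le_rfl le_sup_right)
  -- I3
  · intro b hb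
    by_contra hcon
    push_neg at hcon
    have hall : ∀ k ∈ {a | IsAlphaCompact α a ∧ prec a b}, k = (⊥ : A) := by
      intro k hk
      by_contra hkb
      exact hcon k hkb hk.1 ((hlhd k b).2 fun c hc =>
        dv3 _ _ _ _ inf_le_left hk.2 le_sup_left)
    have : α b = ⊥ := by
      rw [hlc b]
      refine le_antisymm (sSup_le ?_) bot_le
      rintro _ ⟨k, hk, rfl⟩
      rw [hall k hk, m1]
    exact hb (hinj (by rw [this, m1]))
end

section
/- Let (A, ◁, I) satisfy: A a Boolean algebra, ◁ a relation satisfying (DV1)–(DV5), I an ideal satisfying (I1), and let ρ : A → A' be a map into another such structure (A', ◁', I') satisfying (M1) ρ(0)=0, (M2) ρ(a∧b)=ρ(a)∧ρ(b), (D4): for c ∈ I' there is a ∈ I with c ≤ ρ(a), and the weak axiom (∗∗): a ∈ I and a ◁ b imply ¬ρ(¬a) ◁' ρ(b). If additionally (I2) holds in A' (if (x ∧ c) ◁' (y ∨ ¬c) for all c ∈ I' then x ◁' y), then the stronger axiom (D3) holds: a ◁ b implies ¬ρ(¬a) ◁' ρ(b). -/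
theorem stmt19 {A A' : Type*} [BooleanAlgebra A] [BooleanAlgebra A']
    (lhd : A → A → Prop) (I : Set A) (lhd' : A' → A' → Prop) (I' : Set A')
    (dv1 : lhd ⊤ ⊤)
    (dv2 : ∀ a b : A, lhd a b → a ≤ b)
    (dv3 : ∀ a b c d : A, a ≤ b → lhd b c → c ≤ d → lhd a d)
    (dv4 : ∀ a b c : A, lhd a b → lhd a c → lhd a (b ⊓ c))
    (dv5 : ∀ a b : A, lhd a b → lhd bᶜ aᶜ)
    (hne : I.Nonempty)
    (hdown : ∀ a b : A, b ∈ I → a ≤ b → a ∈ I)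
    (hjoin : ∀ a b : A, a ∈ I → b ∈ I → a ⊔ b ∈ I)
    (i1 : ∀ a b : A, a ∈ I → lhd a b → ∃ c ∈ I, lhd a c ∧ lhd c b)
    (dv1' : lhd' ⊤ ⊤)
    (dv2' : ∀ a b : A', lhd' a b → a ≤ b)
    (dv3' : ∀ a b c d : A', a ≤ b → lhd' b c → c ≤ d → lhd' a d)
    (dv4' : ∀ a b c : A', lhd' a b → lhd' a c → lhd' a (b ⊓ c))
    (dv5' : ∀ a b : A', lhd' a b → lhd' bᶜ aᶜ)
    (hne' : I'.Nonempty)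
    (hdown' : ∀ a b : A', b ∈ I' → a ≤ b → a ∈ I')
    (hjoin' : ∀ a b : A', a ∈ I' → b ∈ I' → a ⊔ b ∈ I')
    (ρ : A → A')
    (m1 : ρ ⊥ = ⊥)
    (m2 : ∀ a b : A, ρ (a ⊓ b) = ρ a ⊓ ρ b)
    (d4 : ∀ c ∈ I', ∃ a ∈ I, c ≤ ρ a)
    (wstar : ∀ a b : A, a ∈ I → lhd a b → lhd' ((ρ aᶜ)ᶜ) (ρ b))
    (i2' : ∀ x y : A', (∀ c ∈ I', lhd' (x ⊓ c) (y ⊔ cᶜ)) → lhd' x y) :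
    ∀ a b : A, lhd a b → lhd' ((ρ aᶜ)ᶜ) (ρ b) := by
  intro a b hab
  apply i2'
  intro c hc
  obtain ⟨d, hdI, hcd⟩ := d4 c hc
  have hadI : a ⊓ d ∈ I := hdown _ d hdI inf_le_right
  have had : lhd (a ⊓ d) b := dv3 _ a b b inf_le_left hab le_rfl
  have hw : lhd' ((ρ (a ⊓ d)ᶜ)ᶜ) (ρ b) := wstar _ _ hadI had
  -- key inequality: (ρ aᶜ)ᶜ ⊓ ρ d ≤ (ρ (a ⊓ d)ᶜ)ᶜ
  have hmono : ∀ x y : A, x ≤ y → ρ x ≤ ρ y := by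
    intro x y hxy
    have : ρ (x ⊓ y) = ρ x ⊓ ρ y := m2 x y
    rw [inf_eq_left.mpr hxy] at this
    exact this.le.trans inf_le_right
  have h1 : ρ ((a ⊓ d)ᶜ) ⊓ ρ d ≤ ρ aᶜ := by
    rw [← m2]
    apply hmono
    rw [compl_inf, inf_comm, inf_sup_left]
    simp [inf_comm]
  have key : (ρ aᶜ)ᶜ ⊓ ρ d ≤ (ρ ((a ⊓ d)ᶜ))ᶜ := by
    have := compl_le_compl h1
    rw [compl_inf] at this
    rw [le_compl_iff_disjoint_right]
    have : ρ ((a ⊓ d)ᶜ) ⊓ ((ρ aᶜ)ᶜ ⊓ ρ d) ≤ ρ aᶜ ⊓ (ρ aᶜ)ᶜ := by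
      calc ρ ((a ⊓ d)ᶜ) ⊓ ((ρ aᶜ)ᶜ ⊓ ρ d) = (ρ ((a ⊓ d)ᶜ) ⊓ ρ d) ⊓ (ρ aᶜ)ᶜ := by
            ac_rfl
        _ ≤ ρ aᶜ ⊓ (ρ aᶜ)ᶜ := inf_le_inf_right _ h1
    rw [disjoint_iff_inf_le]
    refine le_trans ?_ (this.trans (by simp))
    rw [inf_comm]
  have hle : (ρ aᶜ)ᶜ ⊓ c ≤ (ρ ((a ⊓ d)ᶜ))ᶜ :=
    le_trans (inf_le_inf_left _ hcd) key
  exact dv3' _ _ _ _ hle hw le_sup_left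
end
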